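/- Let G be a Hausdorff topological group, U a symmetric open neighborhood of the identity, and 𝓤 a uniformity on G inducing the topology of G such that the multiplication map (x,y) ↦ x·y : U²×U² → G is uniformly continuous with respect to 𝓤. Then the inversion map x ↦ x⁻¹ : U → U is uniformly continuous with respect to (the restriction to U of) 𝓤. -/

import Mathlib

open Filter Set Topology Pointwise

/-- The left uniformity filter of a topological group. -/
def leftUF (G : Type*) [Group G] [TopologicalSpace G] : Filter (G × G) :=
  Filter.comap (fun p : G × G => p.1⁻¹ * p.2) (nhds 1)

/-- The right uniformity filter of a topological group. -/
def rightUF (G : Type*) [Group G] [TopologicalSpace G] : Filter (G × G) :=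
  Filter.comap (fun p : G × G => p.1 * p.2⁻¹) (nhds 1)

/-- The product of a uniformity-like filter on `G × G` with itself, as a filter on
`(G × G) × (G × G)`; this agrees with the product uniformity when the filter is a uniformity. -/
def prodUF {G : Type*} (F : Filter (G × G)) : Filter ((G × G) × (G × G)) :=
  Filter.comap (fun q : (G × G) × (G × G) => (q.1.1, q.2.1)) F ⊓
    Filter.comap (fun q : (G × G) × (G × G) => (q.1.2, q.2.2)) F

/-- Multiplication is uniformly continuous on the set `s ⊆ G × G` with respect to the
uniformity-like filter `F` on `G × G`. -/
def MulUCOn {G : Type*} [Mul G] (F : Filter (G × G)) (s : Set (G × G)) : Prop :=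
  Filter.Tendsto (fun q : (G × G) × (G × G) => (q.1.1 * q.1.2, q.2.1 * q.2.2))
    (prodUF F ⊓ 𝓟 (s ×ˢ s)) F

theorem stmt_1 {G : Type*} [Group G] [TopologicalSpace G] [IsTopologicalGroup G] [T2Space G]
    (U : Set G) (hUo : IsOpen U) (hU1 : (1 : G) ∈ U) (hUs : U⁻¹ = U)
    (u : UniformSpace G) (hu : u.toTopologicalSpace = ‹TopologicalSpace G›)
    (hmul : MulUCOn (@uniformity G u) ((U ^ 2) ×ˢ (U ^ 2))) :
    Filter.Tendsto (fun p : G × G => (p.1⁻¹, p.2⁻¹))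
      (@uniformity G u ⊓ 𝓟 (U ×ˢ U)) (@uniformity G u ⊓ 𝓟 (U ×ˢ U)) := by
  set F := @uniformity G u with hF
  set L := F ⊓ 𝓟 (U ×ˢ U) with hL
  set S : Set ((G × G)) := (U ^ 2) ×ˢ (U ^ 2) with hS
  have hmul' : Tendsto (fun q : (G × G) × (G × G) => (q.1.1 * q.1.2, q.2.1 * q.2.2))
      (prodUF F ⊓ 𝓟 (S ×ˢ S)) F := hmul
  -- the neighborhood filter of 1 as a comap of F
  have h1 : (𝓝 (1 : G)) = Filter.comap (fun g : G => ((1 : G), g)) F := by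
    have := @nhds_eq_comap_uniformity G u 1
    rw [hu] at this
    exact this
  -- diagonal maps tend to F
  have hdiag : ∀ (f : G × G → G), Tendsto (fun p : G × G => (f p, f p)) L F := by
    intro f
    rw [Filter.tendsto_def]
    intro s hs
    exact Filter.univ_mem' fun x => @refl_mem_uniformity G u _ _ hs
  have hinv : ∀ x ∈ U, x⁻¹ ∈ U := by
    intro x hx
    rw [← hUs]
    exact Set.inv_mem_inv.2 hx
  have hU2 : ∀ {x y : G}, x ∈ U → y ∈ U → x * y ∈ U ^ 2 := by
    intro x y hx hy
    rw [sq]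
    exact Set.mul_mem_mul hx hy
  have hUsub : ∀ {x : G}, x ∈ U → x ∈ U ^ 2 := by
    intro x hx
    simpa using hU2 hx hU1
  have h1U2 : (1 : G) ∈ U ^ 2 := hUsub hU1
  -- Step 1 : x⁻¹ * y tends to 1
  have step1 : Tendsto (fun p : G × G => p.1⁻¹ * p.2) L (𝓝 (1 : G)) := by
    have hΦ : Tendsto (fun p : G × G => ((p.1⁻¹, p.1), (p.1⁻¹, p.2))) L
        (prodUF F ⊓ 𝓟 (S ×ˢ S)) := by
      refine tendsto_inf.2 ⟨tendsto_inf.2 ⟨?_, ?_⟩, ?_⟩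
      · rw [tendsto_comap_iff]
        exact hdiag fun p => p.1⁻¹
      · rw [tendsto_comap_iff]
        exact tendsto_id.mono_left inf_le_left
      · rw [tendsto_principal, hL, eventually_inf_principal]
        filter_upwards with p hp
        exact ⟨⟨hUsub (hinv _ hp.1), hUsub hp.1⟩, hUsub (hinv _ hp.1), hUsub hp.2⟩
    have := hmul'.comp hΦ
    have h' : Tendsto (fun p : G × G => ((1 : G), p.1⁻¹ * p.2)) L F := by
      simpa [Function.comp_def] using this
    rw [h1, tendsto_comap_iff]
    exact h'
  -- Step 2 : y⁻¹ * x tends to 1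
  have step2 : Tendsto (fun p : G × G => p.2⁻¹ * p.1) L (𝓝 (1 : G)) := by
    have hc : Tendsto (fun g : G => g⁻¹) (𝓝 (1 : G)) (𝓝 (1 : G)) := by
      simpa using (continuous_inv.tendsto (1 : G))
    have := hc.comp step1
    simpa [Function.comp_def, mul_inv_rev] using this
  have key2 : Tendsto (fun p : G × G => ((1 : G), p.2⁻¹ * p.1)) L F := by
    rw [h1, tendsto_comap_iff] at step2
    exact step2
  -- Step 3 : main construction
  have hΦ' : Tendsto (fun p : G × G => (((1 : G), p.1⁻¹), (p.2⁻¹ * p.1, p.1⁻¹))) L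
      (prodUF F ⊓ 𝓟 (S ×ˢ S)) := by
    refine tendsto_inf.2 ⟨tendsto_inf.2 ⟨?_, ?_⟩, ?_⟩
    · rw [tendsto_comap_iff]
      exact key2
    · rw [tendsto_comap_iff]
      exact hdiag fun p => p.1⁻¹
    · rw [tendsto_principal, hL, eventually_inf_principal]
      filter_upwards with p hp
      exact ⟨⟨h1U2, hUsub (hinv _ hp.1)⟩, hU2 (hinv _ hp.2) hp.1, hUsub (hinv _ hp.1)⟩
  have main : Tendsto (fun p : G × G => (p.1⁻¹, p.2⁻¹)) L F := by
    have := hmul'.comp hΦ'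
    simpa [Function.comp_def, mul_assoc] using this
  refine tendsto_inf.2 ⟨main, ?_⟩
  rw [tendsto_principal, hL, eventually_inf_principal]
  filter_upwards with p hp
  exact ⟨hinv _ hp.1, hinv _ hp.2⟩
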